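/- arXiv:2510.04606 — 6 statements merged into one kernel-verified Lean document; each statement's English description precedes it below -/
import Mathlib

section
/- (Envelope theorem for the closed-form last layer, Theorem 1.) Let o, d, n, N be positive integers, β > 0, Y ∈ ℝ^{o×n}, and let Φ : ℝ^N → ℝ^{d×n} be differentiable at a point θ₀ ∈ ℝ^N. Define L(W, θ) = ‖Y − WΦ(θ)‖_F² + β‖W‖_F², the closed-form minimizer W*(θ) = YΦ(θ)ᵀ(Φ(θ)Φ(θ)ᵀ + βI)⁻¹, and L*(θ) = L(W*(θ), θ). Then L* is differentiable at θ₀ and its (Fréchet) derivative at θ₀ equals the derivative at θ₀ of the map θ ↦ L(W*(θ₀), θ) in which the last layer is held fixed at W*(θ₀); in particular ∇L*(θ₀) = ∇_θ L(W*(θ₀), θ₀). -/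
set_option maxHeartbeats 1000000


open Matrix BigOperators

attribute [local instance] Matrix.frobeniusNormedAddCommGroup Matrix.frobeniusNormedSpace


open Matrix BigOperators
attribute [local instance] Matrix.frobeniusNormedAddCommGroup Matrix.frobeniusNormedSpace

noncomputable def entryCLM {m n : ℕ} (i : Fin m) (j : Fin n) :
    Matrix (Fin m) (Fin n) ℝ →L[ℝ] ℝ :=
  LinearMap.toContinuousLinearMap
    { toFun := fun A => A i j
      map_add' := fun _ _ => rfl
      map_smul' := fun _ _ => rfl }

@[simp] lemma entryCLM_apply {m n : ℕ} (i : Fin m) (j : Fin n) (A : Matrix (Fin m) (Fin n) ℝ) :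
    entryCLM i j A = A i j := rfl

lemma diffAt_entry {E : Type*} [NormedAddCommGroup E] [NormedSpace ℝ E] {m n : ℕ}
    {f : E → Matrix (Fin m) (Fin n) ℝ} {x : E} (hf : DifferentiableAt ℝ f x)
    (i : Fin m) (j : Fin n) : DifferentiableAt ℝ (fun θ => f θ i j) x :=
  ((entryCLM i j).differentiable.differentiableAt).comp x hf

lemma diffAt_of_entries {E : Type*} [NormedAddCommGroup E] [NormedSpace ℝ E] {m n : ℕ}
    {f : E → Matrix (Fin m) (Fin n) ℝ} {x : E}
    (h : ∀ i j, DifferentiableAt ℝ (fun θ => f θ i j) x) : DifferentiableAt ℝ f x := by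
  have hfe : f = fun θ => ∑ i, ∑ j, (f θ i j) • Matrix.single i j (1:ℝ) := by
    funext θ
    conv_lhs => rw [matrix_eq_sum_single (f θ)]
    simp [smul_single]
  rw [hfe]
  exact DifferentiableAt.fun_sum fun i _ => DifferentiableAt.fun_sum fun j _ => (h i j).smul_const _

lemma diffAt_prod {E : Type*} [NormedAddCommGroup E] [NormedSpace ℝ E] {ι : Type*}
    [DecidableEq ι] {x : E} (u : Finset ι) (f : ι → E → ℝ)
    (h : ∀ i ∈ u, DifferentiableAt ℝ (f i) x) :
    DifferentiableAt ℝ (fun θ => ∏ i ∈ u, f i θ) x := by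
  induction u using Finset.induction with
  | empty => simp
  | insert _ _ hne ih =>
    simp only [Finset.prod_insert hne]
    exact (h _ (Finset.mem_insert_self _ _)).mul
      (ih fun i hi => h i (Finset.mem_insert_of_mem hi))

lemma diffAt_det {E : Type*} [NormedAddCommGroup E] [NormedSpace ℝ E] {k : ℕ}
    {f : E → Matrix (Fin k) (Fin k) ℝ} {x : E}
    (h : ∀ i j, DifferentiableAt ℝ (fun θ => f θ i j) x) :
    DifferentiableAt ℝ (fun θ => (f θ).det) x := by
  simp only [Matrix.det_apply]
  refine DifferentiableAt.fun_sum fun σ _ => ?_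
  have : (fun θ => Equiv.Perm.sign σ • ∏ i, f θ (σ i) i)
      = fun θ => ((Equiv.Perm.sign σ : ℤ) : ℝ) * ∏ i, f θ (σ i) i := by
    funext θ; simp [Units.smul_def, zsmul_eq_mul]
  rw [this]
  exact (differentiableAt_const _).mul (diffAt_prod Finset.univ (fun i θ => f θ (σ i) i) fun i _ => h (σ i) i)

lemma diffAt_adjugate {E : Type*} [NormedAddCommGroup E] [NormedSpace ℝ E] {k : ℕ}
    {f : E → Matrix (Fin k) (Fin k) ℝ} {x : E}
    (h : ∀ i j, DifferentiableAt ℝ (fun θ => f θ i j) x) (i j : Fin k) :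
    DifferentiableAt ℝ (fun θ => (f θ).adjugate i j) x := by
  simp only [Matrix.adjugate_apply]
  refine diffAt_det fun u v => ?_
  simp only [Matrix.updateRow_apply]
  by_cases hu : u = j
  · simp [hu]
  · simp only [hu, if_false]; exact h u v

lemma quad_alg {o d n : ℕ} (β : ℝ) (Y : Matrix (Fin o) (Fin n) ℝ)
    (Φ₀ : Matrix (Fin d) (Fin n) ℝ) (W₀ W : Matrix (Fin o) (Fin d) ℝ)
    (foc : ∀ i k, ∑ j, (Y i j - ∑ l, W₀ i l * Φ₀ l j) * Φ₀ k j = β * W₀ i k) :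
    ∑ i, ∑ j, (Y i j - ∑ k, W i k * Φ₀ k j) ^ 2 + β * ∑ i, ∑ k, W i k ^ 2
      = (∑ i, ∑ j, (Y i j - ∑ k, W₀ i k * Φ₀ k j) ^ 2 + β * ∑ i, ∑ k, W₀ i k ^ 2)
        + ((∑ i, ∑ j, (∑ k, (W i k - W₀ i k) * Φ₀ k j) ^ 2)
          + β * ∑ i, ∑ k, (W i k - W₀ i k) ^ 2) := by
  have expand : ∀ i j, Y i j - ∑ k, W i k * Φ₀ k j
      = (Y i j - ∑ k, W₀ i k * Φ₀ k j) - ∑ k, (W i k - W₀ i k) * Φ₀ k j := by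
    intro i j
    rw [Finset.sum_congr rfl (fun k _ => sub_mul (W i k) (W₀ i k) (Φ₀ k j)),
      Finset.sum_sub_distrib]
    ring
  have cross : ∑ i, ∑ j, ((Y i j - ∑ k, W₀ i k * Φ₀ k j) * (∑ k, (W i k - W₀ i k) * Φ₀ k j))
      = β * ∑ i, ∑ k, W₀ i k * (W i k - W₀ i k) := by
    rw [Finset.mul_sum]
    refine Finset.sum_congr rfl fun i _ => ?_
    calc ∑ j, ((Y i j - ∑ l, W₀ i l * Φ₀ l j) * (∑ k, (W i k - W₀ i k) * Φ₀ k j))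
        = ∑ j, ∑ k, (W i k - W₀ i k) * ((Y i j - ∑ l, W₀ i l * Φ₀ l j) * Φ₀ k j) := by
          refine Finset.sum_congr rfl fun j _ => ?_
          rw [Finset.mul_sum]
          exact Finset.sum_congr rfl fun k _ => by ring
      _ = ∑ k, ∑ j, (W i k - W₀ i k) * ((Y i j - ∑ l, W₀ i l * Φ₀ l j) * Φ₀ k j) :=
          Finset.sum_comm
      _ = ∑ k, (W i k - W₀ i k) * (β * W₀ i k) := by
          refine Finset.sum_congr rfl fun k _ => ?_
          rw [← Finset.mul_sum, foc i k]
      _ = β * ∑ k, W₀ i k * (W i k - W₀ i k) := by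
          rw [Finset.mul_sum]
          exact Finset.sum_congr rfl fun k _ => by ring
  have sum1 : ∑ i, ∑ j, (Y i j - ∑ k, W i k * Φ₀ k j) ^ 2
      = ∑ i, ∑ j, ((Y i j - ∑ k, W₀ i k * Φ₀ k j) ^ 2
          - 2 * ((Y i j - ∑ k, W₀ i k * Φ₀ k j) * (∑ k, (W i k - W₀ i k) * Φ₀ k j))
          + (∑ k, (W i k - W₀ i k) * Φ₀ k j) ^ 2) := by
    refine Finset.sum_congr rfl fun i _ => Finset.sum_congr rfl fun j _ => ?_
    rw [expand i j]; ring
  have sum2 : ∑ i, ∑ k, W i k ^ 2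
      = ∑ i, ∑ k, (W₀ i k ^ 2 + 2 * (W₀ i k * (W i k - W₀ i k)) + (W i k - W₀ i k) ^ 2) := by
    exact Finset.sum_congr rfl fun i _ => Finset.sum_congr rfl fun k _ => by ring
  rw [sum1, sum2]
  simp only [Finset.sum_add_distrib, Finset.sum_sub_distrib, ← Finset.mul_sum]
  rw [cross]
  ring
/-- Squared Frobenius norm of a real matrix. -/
noncomputable def sqFrob {m n : ℕ} (A : Matrix (Fin m) (Fin n) ℝ) : ℝ :=
  ∑ i, ∑ j, (A i j) ^ 2

/-- The ridge loss `L(W, θ) = ‖Y − WΦ(θ)‖_F² + β‖W‖_F²`. -/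
noncomputable def ridgeLossTheta {o d n N : ℕ} (β : ℝ) (Y : Matrix (Fin o) (Fin n) ℝ)
    (Φ : (Fin N → ℝ) → Matrix (Fin d) (Fin n) ℝ)
    (W : Matrix (Fin o) (Fin d) ℝ) (θ : Fin N → ℝ) : ℝ :=
  sqFrob (Y - W * Φ θ) + β * sqFrob W

/-- The closed-form last layer `W*(θ) = YΦ(θ)ᵀ(Φ(θ)Φ(θ)ᵀ + βI)⁻¹`. -/
noncomputable def ridgeWstarTheta {o d n N : ℕ} (β : ℝ) (Y : Matrix (Fin o) (Fin n) ℝ)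
    (Φ : (Fin N → ℝ) → Matrix (Fin d) (Fin n) ℝ) (θ : Fin N → ℝ) :
    Matrix (Fin o) (Fin d) ℝ :=
  Y * (Φ θ)ᵀ * (Φ θ * (Φ θ)ᵀ + β • (1 : Matrix (Fin d) (Fin d) ℝ))⁻¹

section main
variable {o d n N : ℕ} (β : ℝ) (Y : Matrix (Fin o) (Fin n) ℝ)
    (Φ : (Fin N → ℝ) → Matrix (Fin d) (Fin n) ℝ) (θ₀ : Fin N → ℝ)

lemma posdef_A (hβ : 0 < β) :
    Matrix.PosDef (Φ θ₀ * (Φ θ₀)ᵀ + β • (1 : Matrix (Fin d) (Fin d) ℝ)) := by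
  have h1 : Matrix.PosSemidef (Φ θ₀ * (Φ θ₀)ᵀ) := by
    have := Matrix.posSemidef_self_mul_conjTranspose (Φ θ₀)
    rwa [conjTranspose_eq_transpose_of_trivial] at this
  have h2 : Matrix.PosDef (β • (1 : Matrix (Fin d) (Fin d) ℝ)) := by
    rw [Matrix.smul_one_eq_diagonal]
    exact Matrix.PosDef.diagonal fun _ => hβ
  exact Matrix.PosDef.posSemidef_add h1 h2

lemma detA_ne (hβ : 0 < β) :
    (Φ θ₀ * (Φ θ₀)ᵀ + β • (1 : Matrix (Fin d) (Fin d) ℝ)).det ≠ 0 :=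
  (posdef_A β Φ θ₀ hβ).det_pos.ne'

lemma diffAt_A_entries (hβ : 0 < β) (hΦ : DifferentiableAt ℝ Φ θ₀) (i j : Fin d) :
    DifferentiableAt ℝ
      (fun θ => (Φ θ * (Φ θ)ᵀ + β • (1 : Matrix (Fin d) (Fin d) ℝ)) i j) θ₀ := by
  simp only [Matrix.add_apply, Matrix.mul_apply, Matrix.transpose_apply]
  exact (DifferentiableAt.fun_sum fun l _ =>
    (diffAt_entry hΦ i l).mul (diffAt_entry hΦ j l)).add (differentiableAt_const _)

lemma diffAt_Wstar (hβ : 0 < β) (hΦ : DifferentiableAt ℝ Φ θ₀) :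
    DifferentiableAt ℝ (ridgeWstarTheta β Y Φ) θ₀ := by
  set A : (Fin N → ℝ) → Matrix (Fin d) (Fin d) ℝ :=
    fun θ => Φ θ * (Φ θ)ᵀ + β • (1 : Matrix (Fin d) (Fin d) ℝ) with hA
  have hAe : ∀ i j, DifferentiableAt ℝ (fun θ => A θ i j) θ₀ :=
    diffAt_A_entries β Φ θ₀ hβ hΦ
  have hdet : DifferentiableAt ℝ (fun θ => (A θ).det) θ₀ := diffAt_det hAe
  have hinv : ∀ i j, DifferentiableAt ℝ (fun θ => (A θ)⁻¹ i j) θ₀ := by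
    intro i j
    have : (fun θ => (A θ)⁻¹ i j) =
        fun θ => ((A θ).det)⁻¹ * (A θ).adjugate i j := by
      funext θ
      rw [Matrix.inv_def, Matrix.smul_apply, Ring.inverse_eq_inv, smul_eq_mul]
    rw [this]
    exact (hdet.inv (detA_ne β Φ θ₀ hβ)).mul (diffAt_adjugate hAe i j)
  refine diffAt_of_entries fun i j => ?_
  have : (fun θ => ridgeWstarTheta β Y Φ θ i j) =
      fun θ => ∑ k, (∑ l, Y i l * Φ θ k l) * (A θ)⁻¹ k j := by
    funext θ
    simp [ridgeWstarTheta, Matrix.mul_apply, Matrix.transpose_apply, hA]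
  rw [this]
  exact DifferentiableAt.fun_sum fun k _ =>
    (DifferentiableAt.fun_sum fun l _ =>
      (differentiableAt_const _).mul (diffAt_entry hΦ k l)).mul (hinv k j)

lemma foc_lemma (hdet : (Φ θ₀ * (Φ θ₀)ᵀ + β • (1 : Matrix (Fin d) (Fin d) ℝ)).det ≠ 0)
    (i : Fin o) (k : Fin d) :
    ∑ j, (Y i j - ∑ l, ridgeWstarTheta β Y Φ θ₀ i l * Φ θ₀ l j) * Φ θ₀ k j
      = β * ridgeWstarTheta β Y Φ θ₀ i k := by
  set W₀ := ridgeWstarTheta β Y Φ θ₀ with hW₀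
  have key : W₀ * (Φ θ₀ * (Φ θ₀)ᵀ + β • (1 : Matrix (Fin d) (Fin d) ℝ)) = Y * (Φ θ₀)ᵀ := by
    rw [hW₀, ridgeWstarTheta, Matrix.mul_assoc,
      Matrix.nonsing_inv_mul _ (isUnit_iff_ne_zero.mpr hdet), Matrix.mul_one]
  rw [Matrix.mul_add, Matrix.mul_smul, Matrix.mul_one, ← Matrix.mul_assoc] at key
  have h1 := congrFun (congrFun key i) k
  simp only [Matrix.add_apply, Matrix.smul_apply, Matrix.mul_apply,
    Matrix.transpose_apply, smul_eq_mul] at h1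
  simp only [sub_mul, Finset.sum_sub_distrib]
  linarith [h1]

lemma hcrit (hβ : 0 < β)
    (hdet : (Φ θ₀ * (Φ θ₀)ᵀ + β • (1 : Matrix (Fin d) (Fin d) ℝ)).det ≠ 0) :
    fderiv ℝ (fun W => ridgeLossTheta β Y Φ W θ₀) (ridgeWstarTheta β Y Φ θ₀) = 0 := by
  apply IsLocalMin.fderiv_eq_zero
  apply Filter.Eventually.of_forall
  intro W
  show ridgeLossTheta β Y Φ (ridgeWstarTheta β Y Φ θ₀) θ₀ ≤ ridgeLossTheta β Y Φ W θ₀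
  have h := quad_alg β Y (Φ θ₀) (ridgeWstarTheta β Y Φ θ₀) W (foc_lemma β Y Φ θ₀ hdet)
  have hform : ∀ V : Matrix (Fin o) (Fin d) ℝ, ridgeLossTheta β Y Φ V θ₀
      = ∑ i, ∑ j, (Y i j - ∑ k, V i k * Φ θ₀ k j) ^ 2 + β * ∑ i, ∑ k, V i k ^ 2 := by
    intro V
    simp [ridgeLossTheta, sqFrob, Matrix.sub_apply, Matrix.mul_apply]
  rw [hform, hform]
  rw [h]
  have h1 : (0:ℝ) ≤ ∑ i, ∑ j, (∑ k, (W i k - ridgeWstarTheta β Y Φ θ₀ i k) * Φ θ₀ k j) ^ 2 :=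
    Finset.sum_nonneg fun i _ => Finset.sum_nonneg fun j _ => sq_nonneg _
  have h2 : (0:ℝ) ≤ ∑ i, ∑ k, (W i k - ridgeWstarTheta β Y Φ θ₀ i k) ^ 2 :=
    Finset.sum_nonneg fun i _ => Finset.sum_nonneg fun j _ => sq_nonneg _
  nlinarith
end main

theorem stmt_1 (o d n N : ℕ) (ho : 0 < o) (hd : 0 < d) (hn : 0 < n) (hN : 0 < N)
    (β : ℝ) (hβ : 0 < β)
    (Y : Matrix (Fin o) (Fin n) ℝ)
    (Φ : (Fin N → ℝ) → Matrix (Fin d) (Fin n) ℝ) (θ₀ : Fin N → ℝ)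
    (hΦ : DifferentiableAt ℝ Φ θ₀) :
    DifferentiableAt ℝ
      (fun θ => ridgeLossTheta β Y Φ (ridgeWstarTheta β Y Φ θ) θ) θ₀ ∧
    fderiv ℝ (fun θ => ridgeLossTheta β Y Φ (ridgeWstarTheta β Y Φ θ) θ) θ₀ =
      fderiv ℝ (fun θ => ridgeLossTheta β Y Φ (ridgeWstarTheta β Y Φ θ₀) θ) θ₀ := by
  classical
  have hdet := detA_ne β Φ θ₀ hβ
  have hwdiff : DifferentiableAt ℝ (ridgeWstarTheta β Y Φ) θ₀ :=
    diffAt_Wstar β Y Φ θ₀ hβ hΦ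
  have hF : DifferentiableAt ℝ
      (fun p : Matrix (Fin o) (Fin d) ℝ × (Fin N → ℝ) => ridgeLossTheta β Y Φ p.1 p.2)
      (ridgeWstarTheta β Y Φ θ₀, θ₀) := by
    have hform : (fun p : Matrix (Fin o) (Fin d) ℝ × (Fin N → ℝ) =>
        ridgeLossTheta β Y Φ p.1 p.2)
        = fun p => (∑ i, ∑ j, (Y i j - ∑ k, p.1 i k * Φ p.2 k j) ^ 2)
            + β * ∑ i, ∑ k, p.1 i k ^ 2 := by
      funext p; simp [ridgeLossTheta, sqFrob, Matrix.sub_apply, Matrix.mul_apply]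
    rw [hform]
    have hp1 : ∀ (i : Fin o) (k : Fin d), DifferentiableAt ℝ
        (fun p : Matrix (Fin o) (Fin d) ℝ × (Fin N → ℝ) => p.1 i k)
        (ridgeWstarTheta β Y Φ θ₀, θ₀) :=
      fun i k => diffAt_entry differentiableAt_fst i k
    have hp2 : ∀ (k : Fin d) (j : Fin n), DifferentiableAt ℝ
        (fun p : Matrix (Fin o) (Fin d) ℝ × (Fin N → ℝ) => Φ p.2 k j)
        (ridgeWstarTheta β Y Φ θ₀, θ₀) :=
      fun k j => by have := (diffAt_entry hΦ k j).comp (f := fun p : Matrix (Fin o) (Fin d) ℝ × (Fin N → ℝ) => p.2) (ridgeWstarTheta β Y Φ θ₀, θ₀) differentiableAt_snd; exact this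
    exact ((DifferentiableAt.fun_sum fun i _ => DifferentiableAt.fun_sum fun j _ =>
        ((differentiableAt_const _).sub (DifferentiableAt.fun_sum fun k _ =>
          (hp1 i k).mul (hp2 k j))).pow 2)).add
      ((differentiableAt_const β).mul (DifferentiableAt.fun_sum fun i _ =>
        DifferentiableAt.fun_sum fun k _ => (hp1 i k).pow 2))
  have hL := hF.hasFDerivAt
  set L := fderiv ℝ (fun p : Matrix (Fin o) (Fin d) ℝ × (Fin N → ℝ) =>
    ridgeLossTheta β Y Φ p.1 p.2) (ridgeWstarTheta β Y Φ θ₀, θ₀) with hLdef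
  have h2 : HasFDerivAt (fun θ => ridgeLossTheta β Y Φ (ridgeWstarTheta β Y Φ θ) θ)
      (L.comp ((fderiv ℝ (ridgeWstarTheta β Y Φ) θ₀).prod
        (ContinuousLinearMap.id ℝ (Fin N → ℝ)))) θ₀ := by
    have := hL.comp (f := fun θ => (ridgeWstarTheta β Y Φ θ, θ)) θ₀
      (HasFDerivAt.prodMk hwdiff.hasFDerivAt (hasFDerivAt_id θ₀))
    exact this
  have h1 : HasFDerivAt (fun W => ridgeLossTheta β Y Φ W θ₀)
      (L.comp ((ContinuousLinearMap.id ℝ (Matrix (Fin o) (Fin d) ℝ)).prod 0))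
      (ridgeWstarTheta β Y Φ θ₀) := by
    have := hL.comp (f := fun W : Matrix (Fin o) (Fin d) ℝ => (W, θ₀))
      (ridgeWstarTheta β Y Φ θ₀)
      (HasFDerivAt.prodMk (hasFDerivAt_id _) (hasFDerivAt_const θ₀ _))
    exact this
  have h3 : HasFDerivAt (fun θ => ridgeLossTheta β Y Φ (ridgeWstarTheta β Y Φ θ₀) θ)
      (L.comp (((0 : (Fin N → ℝ) →L[ℝ] Matrix (Fin o) (Fin d) ℝ)).prod
        (ContinuousLinearMap.id ℝ (Fin N → ℝ)))) θ₀ := by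
    have := hL.comp (f := fun θ : Fin N → ℝ => (ridgeWstarTheta β Y Φ θ₀, θ)) θ₀
      (HasFDerivAt.prodMk (hasFDerivAt_const _ θ₀) (hasFDerivAt_id θ₀))
    exact this
  have hzero : L.comp ((ContinuousLinearMap.id ℝ (Matrix (Fin o) (Fin d) ℝ)).prod 0) = 0 := by
    rw [← h1.fderiv]
    exact hcrit β Y Φ θ₀ hβ hdet
  have hkey : L.comp ((fderiv ℝ (ridgeWstarTheta β Y Φ) θ₀).prod
      (ContinuousLinearMap.id ℝ (Fin N → ℝ)))
      = L.comp (((0 : (Fin N → ℝ) →L[ℝ] Matrix (Fin o) (Fin d) ℝ)).prod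
        (ContinuousLinearMap.id ℝ (Fin N → ℝ))) := by
    ext x
    simp only [ContinuousLinearMap.comp_apply, ContinuousLinearMap.prod_apply,
      ContinuousLinearMap.id_apply, ContinuousLinearMap.zero_apply]
    have e1 : ((fderiv ℝ (ridgeWstarTheta β Y Φ) θ₀) x, x)
        = ((fderiv ℝ (ridgeWstarTheta β Y Φ) θ₀) x, (0 : Fin N → ℝ))
          + ((0 : Matrix (Fin o) (Fin d) ℝ), x) := by simp
    rw [e1, map_add]
    have e2 := ContinuousLinearMap.ext_iff.mp hzero ((fderiv ℝ (ridgeWstarTheta β Y Φ) θ₀) x)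
    simp only [ContinuousLinearMap.comp_apply, ContinuousLinearMap.prod_apply,
      ContinuousLinearMap.id_apply, ContinuousLinearMap.zero_apply] at e2
    rw [e2, zero_add]
  exact ⟨h2.differentiableAt, by rw [h2.fderiv, h3.fderiv, hkey]⟩
end

section
/- (Envelope theorem for the proximal closed-form last layer, Theorem 2.) Let o, d, n, N be positive integers, λ > 0, Y ∈ ℝ^{o×n}, W₀ ∈ ℝ^{o×d}, and let Φ : ℝ^N → ℝ^{d×n} be differentiable at θ₀ ∈ ℝ^N. Define the proximal loss L^{prox}(W, θ) = ‖Y − WΦ(θ)‖_F² + λ‖W − W₀‖_F², its minimizer W⋆(θ) = (YΦ(θ)ᵀ + λW₀)(Φ(θ)Φ(θ)ᵀ + λI)⁻¹, and L^{prox⋆}(θ) = L^{prox}(W⋆(θ), θ). Then L^{prox⋆} is differentiable at θ₀ and its derivative at θ₀ equals the derivative at θ₀ of the map θ ↦ ‖Y − W⋆(θ₀)Φ(θ)‖_F² in which the last layer is held fixed at W⋆(θ₀). -/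
open Matrix BigOperators

attribute [local instance] Matrix.frobeniusNormedAddCommGroup Matrix.frobeniusNormedSpace

/-- The proximal loss `L^prox(W, θ) = ‖Y − WΦ(θ)‖_F² + λ‖W − W₀‖_F²`. -/
noncomputable def proxLossTheta {o d n N : ℕ} (lam : ℝ) (Y : Matrix (Fin o) (Fin n) ℝ)
    (W₀ : Matrix (Fin o) (Fin d) ℝ) (Φ : (Fin N → ℝ) → Matrix (Fin d) (Fin n) ℝ)
    (W : Matrix (Fin o) (Fin d) ℝ) (θ : Fin N → ℝ) : ℝ :=
  sqFrob (Y - W * Φ θ) + lam * sqFrob (W - W₀)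

/-- The proximal closed-form last layer `W⋆(θ) = (YΦ(θ)ᵀ + λW₀)(Φ(θ)Φ(θ)ᵀ + λI)⁻¹`. -/
noncomputable def proxWstarTheta {o d n N : ℕ} (lam : ℝ) (Y : Matrix (Fin o) (Fin n) ℝ)
    (W₀ : Matrix (Fin o) (Fin d) ℝ) (Φ : (Fin N → ℝ) → Matrix (Fin d) (Fin n) ℝ)
    (θ : Fin N → ℝ) : Matrix (Fin o) (Fin d) ℝ :=
  (Y * (Φ θ)ᵀ + lam • W₀) * (Φ θ * (Φ θ)ᵀ + lam • (1 : Matrix (Fin d) (Fin d) ℝ))⁻¹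

attribute [local instance] Matrix.frobeniusNormedRing Matrix.frobeniusNormedAlgebra

section Helpers

variable {a b c : ℕ}

private lemma isBBM_mul : IsBoundedBilinearMap ℝ
    (fun p : Matrix (Fin a) (Fin b) ℝ × Matrix (Fin b) (Fin c) ℝ => p.1 * p.2) where
  add_left := fun x₁ x₂ y => Matrix.add_mul x₁ x₂ y
  smul_left := fun r x y => Matrix.smul_mul r x y
  add_right := fun x y₁ y₂ => Matrix.mul_add x y₁ y₂
  smul_right := fun r x y => Matrix.mul_smul x r y
  bound := ⟨1, one_pos, fun x y => by
    simpa using Matrix.frobenius_norm_mul x y⟩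

private lemma DifferentiableAt.matmul {E : Type*} [NormedAddCommGroup E] [NormedSpace ℝ E]
    {f : E → Matrix (Fin a) (Fin b) ℝ} {g : E → Matrix (Fin b) (Fin c) ℝ} {x : E}
    (hf : DifferentiableAt ℝ f x) (hg : DifferentiableAt ℝ g x) :
    DifferentiableAt ℝ (fun t => f t * g t) x :=
  by have := ((isBBM_mul (a := a) (b := b) (c := c)).differentiableAt (f x, g x)).comp x (hf.prodMk hg); exact this

private def transposeL : Matrix (Fin a) (Fin b) ℝ →ₗ[ℝ] Matrix (Fin b) (Fin a) ℝ where
  toFun := Matrix.transpose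
  map_add' := Matrix.transpose_add
  map_smul' := Matrix.transpose_smul

private lemma DifferentiableAt.mtranspose {E : Type*} [NormedAddCommGroup E] [NormedSpace ℝ E]
    {f : E → Matrix (Fin a) (Fin b) ℝ} {x : E} (hf : DifferentiableAt ℝ f x) :
    DifferentiableAt ℝ (fun t => (f t)ᵀ) x :=
  ((LinearMap.toContinuousLinearMap (transposeL (a := a) (b := b))).differentiableAt).comp x hf

private lemma differentiable_sqFrob : Differentiable ℝ (sqFrob (m := a) (n := b)) := by
  have h : (sqFrob (m := a) (n := b)) = fun A => ∑ i, ∑ j, (A i j) ^ 2 := rfl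
  rw [h]
  refine Differentiable.fun_sum fun i _ => Differentiable.fun_sum fun j _ => ?_
  exact ((LinearMap.toContinuousLinearMap
    (Matrix.entryLinearMap ℝ ℝ i j)).differentiable).pow 2

private lemma sqFrob_nonneg (A : Matrix (Fin a) (Fin b) ℝ) : 0 ≤ sqFrob A :=
  Finset.sum_nonneg fun _ _ => Finset.sum_nonneg fun _ _ => sq_nonneg _

/-- Frobenius inner product. -/
private def finner (A B : Matrix (Fin a) (Fin b) ℝ) : ℝ := ∑ i, ∑ j, A i j * B i j

private lemma sqFrob_sub_eq (A B : Matrix (Fin a) (Fin b) ℝ) :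
    sqFrob (A - B) = sqFrob A - 2 * finner A B + sqFrob B := by
  unfold sqFrob finner
  rw [Finset.mul_sum, ← Finset.sum_sub_distrib, ← Finset.sum_add_distrib]
  refine Finset.sum_congr rfl fun i _ => ?_
  rw [Finset.mul_sum, ← Finset.sum_sub_distrib, ← Finset.sum_add_distrib]
  refine Finset.sum_congr rfl fun j _ => ?_
  simp only [Matrix.sub_apply]
  ring

private lemma sqFrob_add_eq (A B : Matrix (Fin a) (Fin b) ℝ) :
    sqFrob (A + B) = sqFrob A + 2 * finner A B + sqFrob B := by
  unfold sqFrob finner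
  rw [Finset.mul_sum, ← Finset.sum_add_distrib, ← Finset.sum_add_distrib]
  refine Finset.sum_congr rfl fun i _ => ?_
  rw [Finset.mul_sum, ← Finset.sum_add_distrib, ← Finset.sum_add_distrib]
  refine Finset.sum_congr rfl fun j _ => ?_
  simp only [Matrix.add_apply]
  ring

private lemma finner_mul_right (A : Matrix (Fin a) (Fin c) ℝ) (H : Matrix (Fin a) (Fin b) ℝ)
    (P : Matrix (Fin b) (Fin c) ℝ) : finner A (H * P) = finner (A * Pᵀ) H := by
  unfold finner
  refine Finset.sum_congr rfl fun i _ => ?_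
  simp only [Matrix.mul_apply, Matrix.transpose_apply, Finset.mul_sum, Finset.sum_mul]
  rw [Finset.sum_comm]
  exact Finset.sum_congr rfl fun k _ => Finset.sum_congr rfl fun j _ => by ring

private lemma finner_smul_left (r : ℝ) (A B : Matrix (Fin a) (Fin b) ℝ) :
    finner (r • A) B = r * finner A B := by
  unfold finner
  rw [Finset.mul_sum]
  refine Finset.sum_congr rfl fun i _ => ?_
  rw [Finset.mul_sum]
  exact Finset.sum_congr rfl fun j _ => by simp [Matrix.smul_apply, mul_assoc]

/-- The abstract envelope theorem. -/
private lemma envelope {E F : Type*} [NormedAddCommGroup E] [NormedSpace ℝ E]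
    [NormedAddCommGroup F] [NormedSpace ℝ F]
    (g : E × F → ℝ) (w : F → E) (θ₀ : F)
    (hw : DifferentiableAt ℝ w θ₀) (hg : DifferentiableAt ℝ g (w θ₀, θ₀))
    (hmin : fderiv ℝ (fun W => g (W, θ₀)) (w θ₀) = 0) :
    DifferentiableAt ℝ (fun θ => g (w θ, θ)) θ₀ ∧
      fderiv ℝ (fun θ => g (w θ, θ)) θ₀ = fderiv ℝ (fun θ => g (w θ₀, θ)) θ₀ := by
  set D := fderiv ℝ g (w θ₀, θ₀) with hD
  have hgF : HasFDerivAt g D (w θ₀, θ₀) := hg.hasFDerivAt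
  have hφ : HasFDerivAt (fun θ => (w θ, θ))
      ((fderiv ℝ w θ₀).prod (ContinuousLinearMap.id ℝ F)) θ₀ :=
    hw.hasFDerivAt.prodMk (hasFDerivAt_id θ₀)
  have h1' := HasFDerivAt.comp (f := fun θ => (w θ, θ)) θ₀ hgF hφ
  have h1 : HasFDerivAt (fun θ => g (w θ, θ))
      (D.comp ((fderiv ℝ w θ₀).prod (ContinuousLinearMap.id ℝ F))) θ₀ := h1'
  have hψ : HasFDerivAt (fun θ : F => (w θ₀, θ))
      (((0 : F →L[ℝ] E)).prod (ContinuousLinearMap.id ℝ F)) θ₀ :=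
    (hasFDerivAt_const (w θ₀) θ₀).prodMk (hasFDerivAt_id θ₀)
  have h2' := HasFDerivAt.comp (f := fun θ : F => (w θ₀, θ)) θ₀ hgF hψ
  have h2 : HasFDerivAt (fun θ => g (w θ₀, θ))
      (D.comp (((0 : F →L[ℝ] E)).prod (ContinuousLinearMap.id ℝ F))) θ₀ := h2'
  have h3' := HasFDerivAt.comp (f := fun W : E => (W, θ₀)) (w θ₀) hgF (hasFDerivAt_prodMk_left (w θ₀) θ₀)
  have h3 : HasFDerivAt (fun W => g (W, θ₀))
      (D.comp (ContinuousLinearMap.inl ℝ E F)) (w θ₀) := h3'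
  have hmin' : D.comp (ContinuousLinearMap.inl ℝ E F) = 0 := by
    rw [← h3.fderiv]; exact hmin
  refine ⟨h1.differentiableAt, ?_⟩
  rw [h1.fderiv, h2.fderiv]
  ext v
  have hz : D (fderiv ℝ w θ₀ v, 0) = 0 := by
    have := congrFun (congrArg DFunLike.coe hmin') (fderiv ℝ w θ₀ v)
    simpa using this
  have hsplit : ((fderiv ℝ w θ₀ v, v) : E × F) = (fderiv ℝ w θ₀ v, 0) + (0, v) := by
    simp [Prod.ext_iff]
  simp only [ContinuousLinearMap.comp_apply, ContinuousLinearMap.prod_apply,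
    ContinuousLinearMap.id_apply, ContinuousLinearMap.zero_apply]
  rw [hsplit, map_add, hz, zero_add]

end Helpers

theorem stmt_3 (o d n N : ℕ) (ho : 0 < o) (hd : 0 < d) (hn : 0 < n) (hN : 0 < N)
    (lam : ℝ) (hlam : 0 < lam)
    (Y : Matrix (Fin o) (Fin n) ℝ) (W₀ : Matrix (Fin o) (Fin d) ℝ)
    (Φ : (Fin N → ℝ) → Matrix (Fin d) (Fin n) ℝ) (θ₀ : Fin N → ℝ)
    (hΦ : DifferentiableAt ℝ Φ θ₀) :
    DifferentiableAt ℝ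
      (fun θ => proxLossTheta lam Y W₀ Φ (proxWstarTheta lam Y W₀ Φ θ) θ) θ₀ ∧
    fderiv ℝ (fun θ => proxLossTheta lam Y W₀ Φ (proxWstarTheta lam Y W₀ Φ θ) θ) θ₀ =
      fderiv ℝ (fun θ => sqFrob (Y - proxWstarTheta lam Y W₀ Φ θ₀ * Φ θ)) θ₀ := by
  classical
  set Φ₀ : Matrix (Fin d) (Fin n) ℝ := Φ θ₀ with hΦ₀
  set M : (Fin N → ℝ) → Matrix (Fin d) (Fin d) ℝ :=
    fun θ => Φ θ * (Φ θ)ᵀ + lam • (1 : Matrix (Fin d) (Fin d) ℝ) with hMdef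
  -- positive definiteness of M θ₀
  have hsmul1 : (lam • (1 : Matrix (Fin d) (Fin d) ℝ)).PosDef := by
    rw [Matrix.smul_one_eq_diagonal]
    exact Matrix.posDef_diagonal_iff.mpr fun _ => hlam
  have hT : Φ₀ᵀ = Φ₀ᴴ := by
    ext i j; simp [Matrix.conjTranspose_apply]
  have hPSD : (Φ₀ * Φ₀ᵀ).PosSemidef := by
    rw [hT]; exact Matrix.posSemidef_self_mul_conjTranspose Φ₀
  have hMpd : (M θ₀).PosDef := Matrix.PosDef.posSemidef_add hPSD hsmul1
  have hMdet : IsUnit (M θ₀).det := hMpd.det_pos.ne'.isUnit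
  set Ws : Matrix (Fin o) (Fin d) ℝ := proxWstarTheta lam Y W₀ Φ θ₀ with hWs
  -- the normal equation
  have hWsM : Ws * M θ₀ = Y * Φ₀ᵀ + lam • W₀ :=
    Matrix.nonsing_inv_mul_cancel_right _ _ hMdet
  have h1 : Ws * (Φ₀ * Φ₀ᵀ) + lam • Ws = Y * Φ₀ᵀ + lam • W₀ := by
    have : Ws * M θ₀ = Ws * (Φ₀ * Φ₀ᵀ) + lam • Ws := by
      show Ws * (Φ₀ * Φ₀ᵀ + lam • (1 : Matrix (Fin d) (Fin d) ℝ)) = _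
      rw [Matrix.mul_add, Matrix.mul_smul, Matrix.mul_one]
    rw [← this, hWsM]
  have hnormal : (Y - Ws * Φ₀) * Φ₀ᵀ = lam • (Ws - W₀) := by
    rw [Matrix.sub_mul, smul_sub, Matrix.mul_assoc]
    have h2 : Ws * (Φ₀ * Φ₀ᵀ) = Y * Φ₀ᵀ + lam • W₀ - lam • Ws := by
      rw [← h1]; abel
    rw [h2]; abel
  -- global minimality of Ws in W ↦ L(W, θ₀)
  have hglob : ∀ W, proxLossTheta lam Y W₀ Φ Ws θ₀ ≤ proxLossTheta lam Y W₀ Φ W θ₀ := by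
    intro W
    set H : Matrix (Fin o) (Fin d) ℝ := W - Ws with hH
    have hW : W = Ws + H := by rw [hH]; abel
    have e1 : Y - W * Φ₀ = (Y - Ws * Φ₀) - H * Φ₀ := by
      rw [hW, Matrix.add_mul]; abel
    have e2 : W - W₀ = (Ws - W₀) + H := by rw [hW]; abel
    have key1 : sqFrob (Y - W * Φ₀) =
        sqFrob (Y - Ws * Φ₀) - 2 * finner (Y - Ws * Φ₀) (H * Φ₀) + sqFrob (H * Φ₀) := by
      rw [e1]; exact sqFrob_sub_eq _ _
    have key2 : sqFrob (W - W₀) =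
        sqFrob (Ws - W₀) + 2 * finner (Ws - W₀) H + sqFrob H := by
      rw [e2]; exact sqFrob_add_eq _ _
    have key3 : finner (Y - Ws * Φ₀) (H * Φ₀) = lam * finner (Ws - W₀) H := by
      rw [finner_mul_right, hnormal, finner_smul_left]
    show sqFrob (Y - Ws * Φ₀) + lam * sqFrob (Ws - W₀) ≤
      sqFrob (Y - W * Φ₀) + lam * sqFrob (W - W₀)
    rw [key1, key2, key3]
    have h3 : 0 ≤ sqFrob (H * Φ₀) := sqFrob_nonneg _
    have h4 : 0 ≤ sqFrob H := sqFrob_nonneg _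
    nlinarith [mul_nonneg hlam.le h4]
  -- differentiability of W⋆
  have hΦT : DifferentiableAt ℝ (fun θ => (Φ θ)ᵀ) θ₀ := hΦ.mtranspose
  have hMd : DifferentiableAt ℝ M θ₀ := (hΦ.matmul hΦT).add (differentiableAt_const _)
  have hInvd : DifferentiableAt ℝ (fun θ => (M θ)⁻¹) θ₀ := by
    have hre : (fun θ => (M θ)⁻¹) = fun θ => Ring.inverse (M θ) :=
      funext fun θ => Matrix.nonsing_inv_eq_ringInverse _
    rw [hre]
    exact (differentiableAt_inverse
      ((Matrix.isUnit_iff_isUnit_det _).mpr hMdet)).comp θ₀ hMd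
  have hWdiff : DifferentiableAt ℝ (proxWstarTheta lam Y W₀ Φ) θ₀ := by
    have : proxWstarTheta lam Y W₀ Φ =
        fun θ => (Y * (Φ θ)ᵀ + lam • W₀) * (M θ)⁻¹ := rfl
    rw [this]
    exact (((differentiableAt_const Y).matmul hΦT).add
      (differentiableAt_const (lam • W₀))).matmul hInvd
  -- joint differentiability of the loss
  set g : Matrix (Fin o) (Fin d) ℝ × (Fin N → ℝ) → ℝ :=
    fun p => proxLossTheta lam Y W₀ Φ p.1 p.2 with hgdef
  have hgdiff : DifferentiableAt ℝ g (Ws, θ₀) := by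
    apply DifferentiableAt.add
    · exact (differentiable_sqFrob.differentiableAt).comp (Ws, θ₀)
        ((differentiableAt_const Y).sub
          (differentiableAt_fst.matmul (hΦ.comp (Ws, θ₀) differentiableAt_snd)))
    · exact ((differentiable_sqFrob.differentiableAt).comp (Ws, θ₀)
        (differentiableAt_fst.sub (differentiableAt_const W₀))).const_mul lam
  -- vanishing partial derivative in W
  have hloc : IsLocalMin (fun W => g (W, θ₀)) Ws := Filter.Eventually.of_forall hglob
  have hmin : fderiv ℝ (fun W => g (W, θ₀)) Ws = 0 := hloc.fderiv_eq_zero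
  obtain ⟨hdiff, heq⟩ := envelope g (proxWstarTheta lam Y W₀ Φ) θ₀ hWdiff hgdiff hmin
  refine ⟨hdiff, ?_⟩
  rw [heq]
  have hrw : (fun θ => g (Ws, θ)) =
      fun θ => sqFrob (Y - Ws * Φ θ) + lam * sqFrob (Ws - W₀) := rfl
  rw [hrw, fderiv_add_const]
end

section
/- Let o, d, n be positive integers, β > 0, Y ∈ ℝ^{o×n}, Φ ∈ ℝ^{d×n}, and set Y_⊥ = Y(I − Φᵀ(ΦΦᵀ + βI)⁻¹Φ). Then the gradient of the reduced loss L* at Φ (the matrix ∇L*(Φ) ∈ ℝ^{d×n} representing the derivative DL*(Φ) via the trace inner product) satisfies ∇L*(Φ) = −2 (ΦΦᵀ + βI)⁻¹ Φ Yᵀ Y_⊥. -/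
open Matrix BigOperators

attribute [local instance] Matrix.frobeniusNormedAddCommGroup Matrix.frobeniusNormedSpace
attribute [local instance] Matrix.frobeniusNormedRing Matrix.frobeniusNormedAlgebra

/-- Matrix multiplication (rectangular) is a bounded bilinear map for the Frobenius norm. -/
lemma matmul_ibbm {a b c : ℕ} : IsBoundedBilinearMap ℝ
    (fun z : Matrix (Fin a) (Fin b) ℝ × Matrix (Fin b) (Fin c) ℝ => z.1 * z.2) where
  add_left _ _ _ := Matrix.add_mul _ _ _
  smul_left _ _ _ := Matrix.smul_mul _ _ _
  add_right _ _ _ := Matrix.mul_add _ _ _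
  smul_right _ _ _ := Matrix.mul_smul _ _ _
  bound := ⟨1, one_pos, fun x y => by simpa using Matrix.frobenius_norm_mul x y⟩

/-- Transpose as a continuous linear map. -/
noncomputable def tCLM (a b : ℕ) :
    Matrix (Fin a) (Fin b) ℝ →L[ℝ] Matrix (Fin b) (Fin a) ℝ :=
  LinearMap.toContinuousLinearMap
    { toFun := fun X => Xᵀ
      map_add' := fun _ _ => Matrix.transpose_add _ _
      map_smul' := fun _ _ => Matrix.transpose_smul _ _ }

@[simp] lemma tCLM_apply {a b : ℕ} (X : Matrix (Fin a) (Fin b) ℝ) : tCLM a b X = Xᵀ := rfl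

lemma HasFDerivAt.matmul {p q a b c : ℕ} {x : Matrix (Fin p) (Fin q) ℝ}
    {f : Matrix (Fin p) (Fin q) ℝ → Matrix (Fin a) (Fin b) ℝ}
    {g : Matrix (Fin p) (Fin q) ℝ → Matrix (Fin b) (Fin c) ℝ}
    {f' : Matrix (Fin p) (Fin q) ℝ →L[ℝ] Matrix (Fin a) (Fin b) ℝ}
    {g' : Matrix (Fin p) (Fin q) ℝ →L[ℝ] Matrix (Fin b) (Fin c) ℝ}
    (hf : HasFDerivAt f f' x) (hg : HasFDerivAt g g' x) :
    HasFDerivAt (fun X => f X * g X)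
      ((matmul_ibbm.deriv (f x, g x)).comp (f'.prod g')) x :=
  by have := HasFDerivAt.comp (𝕜 := ℝ) x (matmul_ibbm.hasFDerivAt (f x, g x)) (HasFDerivAt.prodMk hf hg); exact this

lemma matmul_ibbm_deriv_apply {a b c : ℕ}
    (P q : Matrix (Fin a) (Fin b) ℝ × Matrix (Fin b) (Fin c) ℝ) :
    (matmul_ibbm.deriv P) q = P.1 * q.2 + q.1 * P.2 :=
  matmul_ibbm.deriv_apply P q

/-- `Z ↦ trace (Y Z Yᵀ)` as a continuous linear map. -/
noncomputable def trCLM {o n : ℕ} (Y : Matrix (Fin o) (Fin n) ℝ) :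
    Matrix (Fin n) (Fin n) ℝ →L[ℝ] ℝ :=
  LinearMap.toContinuousLinearMap
    { toFun := fun Z => trace (Y * Z * Yᵀ)
      map_add' := fun _ _ => by simp [Matrix.mul_add, Matrix.add_mul]
      map_smul' := fun _ _ => by simp [Matrix.mul_smul, Matrix.smul_mul] }

@[simp] lemma trCLM_apply {o n : ℕ} (Y : Matrix (Fin o) (Fin n) ℝ)
    (Z : Matrix (Fin n) (Fin n) ℝ) : trCLM Y Z = trace (Y * Z * Yᵀ) := rfl

/-- The closed-form ridge solution `W*(Φ) = YΦᵀ(ΦΦᵀ + βI)⁻¹`. -/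
noncomputable def Wstar {o d n : ℕ} (β : ℝ) (Y : Matrix (Fin o) (Fin n) ℝ)
    (Φ : Matrix (Fin d) (Fin n) ℝ) : Matrix (Fin o) (Fin d) ℝ :=
  Y * Φᵀ * (Φ * Φᵀ + β • (1 : Matrix (Fin d) (Fin d) ℝ))⁻¹

/-- The reduced loss `L*(Φ) = ‖Y − W*(Φ)Φ‖_F² + β‖W*(Φ)‖_F²`. -/
noncomputable def Lstar {o d n : ℕ} (β : ℝ) (Y : Matrix (Fin o) (Fin n) ℝ)
    (Φ : Matrix (Fin d) (Fin n) ℝ) : ℝ :=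
  sqFrob (Y - Wstar β Y Φ * Φ) + β * sqFrob (Wstar β Y Φ)

lemma sqFrob_eq_trace {m n : ℕ} (A : Matrix (Fin m) (Fin n) ℝ) :
    sqFrob A = trace (A * Aᵀ) := by
  simp [sqFrob, Matrix.trace, Matrix.mul_apply, Matrix.diag, sq]

lemma Amat_posDef {d n : ℕ} (β : ℝ) (hβ : 0 < β) (Φ : Matrix (Fin d) (Fin n) ℝ) :
    (Φ * Φᵀ + β • (1 : Matrix (Fin d) (Fin d) ℝ)).PosDef := by
  have h1 : (Φ * Φᵀ).PosSemidef := by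
    have := Matrix.posSemidef_self_mul_conjTranspose Φ
    rwa [Matrix.conjTranspose_eq_transpose_of_trivial] at this
  have h2 : (β • (1 : Matrix (Fin d) (Fin d) ℝ)).PosDef := by
    rw [Matrix.smul_one_eq_diagonal]
    exact Matrix.posDef_diagonal_iff.mpr fun _ => hβ
  exact Matrix.PosDef.posSemidef_add h1 h2

lemma lstar_key {o d n : ℕ} (β : ℝ) (hβ : 0 < β) (Y : Matrix (Fin o) (Fin n) ℝ)
    (X : Matrix (Fin d) (Fin n) ℝ) :
    Lstar β Y X = trace (Y * Yᵀ) -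
      trace (Y * ((Xᵀ * (X * Xᵀ + β • (1 : Matrix (Fin d) (Fin d) ℝ))⁻¹) * X) * Yᵀ) := by
  have hXpos := Amat_posDef β hβ X
  have hNAX : (X * Xᵀ + β • (1 : Matrix (Fin d) (Fin d) ℝ))⁻¹ * (X * Xᵀ + β • 1) = 1 :=
    Matrix.nonsing_inv_mul _ ((Matrix.isUnit_iff_isUnit_det _).mp hXpos.isUnit)
  rw [Lstar, Wstar]
  set AX : Matrix (Fin d) (Fin d) ℝ := X * Xᵀ + β • 1 with hAX
  set W : Matrix (Fin o) (Fin d) ℝ := Y * Xᵀ * AX⁻¹ with hW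
  have hWA : W * AX = Y * Xᵀ := by
    rw [hW, Matrix.mul_assoc, hNAX, Matrix.mul_one]
  have expand : W * AX * Wᵀ = W * X * Xᵀ * Wᵀ + β • (W * Wᵀ) := by
    rw [hAX]
    simp [Matrix.mul_add, Matrix.add_mul, Matrix.mul_smul, Matrix.smul_mul, Matrix.mul_assoc]
  have key : trace (W * X * (W * X)ᵀ) + β * trace (W * Wᵀ) = trace (Y * Xᵀ * Wᵀ) := by
    rw [← hWA, expand]
    simp [Matrix.transpose_mul, trace_add, trace_smul, smul_eq_mul, Matrix.mul_assoc]
  have h2 : trace (Y * (W * X)ᵀ) = trace (W * X * Yᵀ) := by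
    rw [trace_mul_comm]
    rw [← trace_transpose_mul, transpose_transpose]
  have h3 : trace (W * X * Yᵀ) = trace (Y * ((Xᵀ * AX⁻¹) * X) * Yᵀ) := by
    rw [hW]
    simp [Matrix.mul_assoc]
  have h4 : trace (Y * (W * X)ᵀ) = trace (Y * Xᵀ * Wᵀ) := by
    simp [Matrix.transpose_mul, Matrix.mul_assoc]
  rw [sqFrob_eq_trace, sqFrob_eq_trace]
  rw [Matrix.transpose_sub, Matrix.sub_mul, Matrix.mul_sub, Matrix.mul_sub]
  rw [trace_sub, trace_sub, trace_sub]
  linarith [key, h2, h3, h4]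

lemma trace_grad_eq {o d n : ℕ} (Y : Matrix (Fin o) (Fin n) ℝ) (Φ Ψ : Matrix (Fin d) (Fin n) ℝ)
    (N : Matrix (Fin d) (Fin d) ℝ) (hNT : Nᵀ = N) :
    -(Y * (Φᵀ * N * Ψ + (Φᵀ * -(N * (Φ * Ψᵀ + Ψ * Φᵀ) * N) + Ψᵀ * N) * Φ) * Yᵀ).trace =
      (((-2 : ℝ) • (N * Φ * Yᵀ * (Y * (1 - Φᵀ * N * Φ))))ᵀ * Ψ).trace := by
  simp only [Matrix.mul_add, Matrix.add_mul, Matrix.mul_neg, Matrix.neg_mul,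
    Matrix.mul_sub, Matrix.sub_mul, Matrix.mul_one, Matrix.one_mul,
    Matrix.transpose_smul, Matrix.transpose_mul, Matrix.transpose_sub,
    Matrix.transpose_one, Matrix.transpose_transpose, hNT, Matrix.smul_mul,
    trace_smul, trace_add, trace_sub, trace_neg, Matrix.mul_assoc, smul_eq_mul]
  have e1 : (Y * (Φᵀ * (N * (Ψ * Yᵀ)))).trace = (Ψ * (Yᵀ * (Y * (Φᵀ * N)))).trace := by
    rw [trace_mul_comm]; simp only [Matrix.mul_assoc]
    rw [trace_mul_comm]; simp only [Matrix.mul_assoc]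
    rw [trace_mul_comm]; simp only [Matrix.mul_assoc]
  have e4 : (Y * (Ψᵀ * (N * (Φ * Yᵀ)))).trace = (Ψ * (Yᵀ * (Y * (Φᵀ * N)))).trace := by
    rw [trace_mul_comm]; simp only [Matrix.mul_assoc]
    rw [← Matrix.transpose_transpose (N * (Φ * (Yᵀ * Y))), trace_transpose_mul]
    simp only [Matrix.transpose_mul, Matrix.transpose_transpose, hNT, Matrix.mul_assoc]
  have e3 : (Y * (Φᵀ * (N * (Ψ * (Φᵀ * (N * (Φ * Yᵀ))))))).trace
      = (Ψ * (Φᵀ * (N * (Φ * (Yᵀ * (Y * (Φᵀ * N))))))).trace := by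
    rw [trace_mul_comm]; simp only [Matrix.mul_assoc]
    rw [trace_mul_comm]; simp only [Matrix.mul_assoc]
    rw [trace_mul_comm]; simp only [Matrix.mul_assoc]
  have e2 : (Y * (Φᵀ * (N * (Φ * (Ψᵀ * (N * (Φ * Yᵀ))))))).trace
      = (Ψ * (Φᵀ * (N * (Φ * (Yᵀ * (Y * (Φᵀ * N))))))).trace := by
    rw [trace_mul_comm]; simp only [Matrix.mul_assoc]
    rw [trace_mul_comm]; simp only [Matrix.mul_assoc]
    rw [trace_mul_comm]; simp only [Matrix.mul_assoc]
    rw [trace_mul_comm]; simp only [Matrix.mul_assoc]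
    rw [← Matrix.transpose_transpose (N * (Φ * (Yᵀ * (Y * (Φᵀ * (N * Φ)))))),
      trace_transpose_mul]
    simp only [Matrix.transpose_mul, Matrix.transpose_transpose, hNT, Matrix.mul_assoc]
  have r1 : (Ψ * (Yᵀ * (Y * (Φᵀ * N)))).trace = (Yᵀ * (Y * (Φᵀ * (N * Ψ)))).trace := by
    rw [trace_mul_comm]; simp only [Matrix.mul_assoc]
  have r2 : (Ψ * (Φᵀ * (N * (Φ * (Yᵀ * (Y * (Φᵀ * N))))))).trace
      = (Φᵀ * (N * (Φ * (Yᵀ * (Y * (Φᵀ * (N * Ψ))))))).trace := by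
    rw [trace_mul_comm]; simp only [Matrix.mul_assoc]
  rw [e1, e2, e3, e4, ← r1, ← r2]
  ring

theorem stmt_5 (o d n : ℕ) (ho : 0 < o) (hd : 0 < d) (hn : 0 < n)
    (β : ℝ) (hβ : 0 < β)
    (Y : Matrix (Fin o) (Fin n) ℝ) (Φ : Matrix (Fin d) (Fin n) ℝ) :
    DifferentiableAt ℝ (Lstar β Y) Φ ∧
    ∀ Ψ : Matrix (Fin d) (Fin n) ℝ,
      fderiv ℝ (Lstar β Y) Φ Ψ =
        trace ((((-2 : ℝ) • ((Φ * Φᵀ + β • (1 : Matrix (Fin d) (Fin d) ℝ))⁻¹ * Φ * Yᵀ *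
          (Y * ((1 : Matrix (Fin n) (Fin n) ℝ) -
            Φᵀ * (Φ * Φᵀ + β • (1 : Matrix (Fin d) (Fin d) ℝ))⁻¹ * Φ))))ᵀ) * Ψ) := by
  classical
  set F : Matrix (Fin d) (Fin n) ℝ → Matrix (Fin d) (Fin d) ℝ :=
    fun X => X * Xᵀ + β • (1 : Matrix (Fin d) (Fin d) ℝ) with hFdef
  set A : Matrix (Fin d) (Fin d) ℝ := F Φ with hAdef
  set N : Matrix (Fin d) (Fin d) ℝ := A⁻¹ with hNdef
  have hApos : A.PosDef := Amat_posDef β hβ Φ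
  have hAunit : IsUnit A := hApos.isUnit
  have hAT : Aᵀ = A := by
    simp [hAdef, hFdef, Matrix.transpose_add, Matrix.transpose_mul, Matrix.transpose_smul]
  have hNT : Nᵀ = N := by
    rw [hNdef, Matrix.transpose_nonsing_inv, hAT]
  -- derivative chain
  have hXT : HasFDerivAt (fun X : Matrix (Fin d) (Fin n) ℝ => Xᵀ) (tCLM d n) Φ :=
    (tCLM d n).hasFDerivAt
  have hid : HasFDerivAt (fun X : Matrix (Fin d) (Fin n) ℝ => X)
      (ContinuousLinearMap.id ℝ _) Φ := hasFDerivAt_id Φ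
  have hF : HasFDerivAt F
      (((matmul_ibbm.deriv (Φ, Φᵀ)).comp
        ((ContinuousLinearMap.id ℝ _).prod (tCLM d n)))) Φ := by
    have := (HasFDerivAt.matmul hid hXT).add_const (β • (1 : Matrix (Fin d) (Fin d) ℝ))
    exact this
  have hinv : HasFDerivAt (Ring.inverse : Matrix (Fin d) (Fin d) ℝ → Matrix (Fin d) (Fin d) ℝ)
      (-(ContinuousLinearMap.mulLeftRight ℝ _ N N)) A := by
    have h := hasFDerivAt_ringInverse (𝕜 := ℝ) hAunit.unit
    have h1 : ((hAunit.unit⁻¹ : (Matrix (Fin d) (Fin d) ℝ)ˣ) : Matrix (Fin d) (Fin d) ℝ) = N := by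
      rw [Matrix.coe_units_inv, hAunit.unit_spec]
    rw [h1] at h
    rwa [hAunit.unit_spec] at h
  have hNf : HasFDerivAt (fun X => (F X)⁻¹)
      ((-(ContinuousLinearMap.mulLeftRight ℝ _ N N)).comp
        ((matmul_ibbm.deriv (Φ, Φᵀ)).comp
          ((ContinuousLinearMap.id ℝ _).prod (tCLM d n)))) Φ := by
    have heq : (fun X : Matrix (Fin d) (Fin n) ℝ => (F X)⁻¹)
        = fun X => Ring.inverse (F X) :=
      funext fun X => Matrix.nonsing_inv_eq_ringInverse _
    rw [heq]
    exact hinv.comp Φ hF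
  set D1 := ((matmul_ibbm.deriv (Φ, Φᵀ)).comp
    ((ContinuousLinearMap.id ℝ _).prod (tCLM d n))) with hD1
  set DN := ((-(ContinuousLinearMap.mulLeftRight ℝ
      (Matrix (Fin d) (Fin d) ℝ) N N)).comp D1) with hDN
  have hu : HasFDerivAt (fun X : Matrix (Fin d) (Fin n) ℝ => Xᵀ * (F X)⁻¹)
      ((matmul_ibbm.deriv (Φᵀ, N)).comp ((tCLM d n).prod DN)) Φ :=
    HasFDerivAt.matmul hXT hNf
  set Du := (matmul_ibbm.deriv (Φᵀ, N)).comp ((tCLM d n).prod DN) with hDu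
  have hv : HasFDerivAt (fun X : Matrix (Fin d) (Fin n) ℝ => (Xᵀ * (F X)⁻¹) * X)
      ((matmul_ibbm.deriv (Φᵀ * N, Φ)).comp (Du.prod (ContinuousLinearMap.id ℝ _))) Φ :=
    HasFDerivAt.matmul hu hid
  set Dv := ((matmul_ibbm.deriv (Φᵀ * N, Φ)).comp
    (Du.prod (ContinuousLinearMap.id ℝ _))) with hDv
  have hg : HasFDerivAt
      (fun X : Matrix (Fin d) (Fin n) ℝ =>
        trace (Y * Yᵀ) - trCLM Y ((Xᵀ * (F X)⁻¹) * X))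
      (-((trCLM Y).comp Dv)) Φ :=
    (((trCLM Y).hasFDerivAt).comp Φ hv).const_sub (trace (Y * Yᵀ))
  have hLeq : Lstar β Y = fun X : Matrix (Fin d) (Fin n) ℝ =>
      trace (Y * Yᵀ) - trCLM Y ((Xᵀ * (F X)⁻¹) * X) := by
    funext X
    rw [trCLM_apply, hFdef, lstar_key β hβ Y X]
  rw [hLeq]
  refine ⟨hg.differentiableAt, fun Ψ => ?_⟩
  rw [hg.fderiv]
  simp only [ContinuousLinearMap.neg_apply, ContinuousLinearMap.comp_apply, hDv, hDu, hDN, hD1,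
    matmul_ibbm_deriv_apply, ContinuousLinearMap.prod_apply, ContinuousLinearMap.id_apply,
    tCLM_apply, trCLM_apply, ContinuousLinearMap.mulLeftRight_apply]
  exact trace_grad_eq Y Φ Ψ N hNT
end

section
/- Let o, d, n be positive integers, β > 0, and Y ∈ ℝ^{o×n} with Y ≠ 0. Then the zero feature matrix is not a global minimizer of the reduced loss L* : ℝ^{d×n} → ℝ: there exists Φ ∈ ℝ^{d×n} with L*(Φ) < L*(0) = ‖Y‖_F². -/
open Matrix BigOperators

attribute [local instance] Matrix.frobeniusNormedAddCommGroup Matrix.frobeniusNormedSpace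

theorem stmt_8 (o d n : ℕ) (ho : 0 < o) (hd : 0 < d) (hn : 0 < n)
    (β : ℝ) (hβ : 0 < β)
    (Y : Matrix (Fin o) (Fin n) ℝ) (hY : Y ≠ 0) :
    Lstar β Y (0 : Matrix (Fin d) (Fin n) ℝ) = sqFrob Y ∧
    ∃ Φ : Matrix (Fin d) (Fin n) ℝ,
      Lstar β Y Φ < Lstar β Y (0 : Matrix (Fin d) (Fin n) ℝ) := by
  have hβ1 : (0:ℝ) < 1 + β := by linarith
  have hL0 : Lstar β Y (0 : Matrix (Fin d) (Fin n) ℝ) = sqFrob Y := by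
    simp [Lstar, Wstar, sqFrob]
  refine ⟨hL0, ?_⟩
  -- pick a nonzero entry of Y
  obtain ⟨i1, j0, hij⟩ : ∃ i j, Y i j ≠ 0 := by
    by_contra h
    push_neg at h
    exact hY (by ext i j; simp [h i j])
  set i0 : Fin d := ⟨0, hd⟩
  set Φ : Matrix (Fin d) (Fin n) ℝ :=
    Matrix.of (fun k j => if k = i0 ∧ j = j0 then (1:ℝ) else 0) with hΦ
  set g : Fin d → ℝ := fun k => (if k = i0 then (1:ℝ) else 0) + β with hg
  have hgne : ∀ k, g k ≠ 0 := by
    intro k; simp only [hg]; split <;> positivity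
  have hM : Φ * Φᵀ + β • (1 : Matrix (Fin d) (Fin d) ℝ) = Matrix.diagonal g := by
    ext a b
    simp only [Matrix.add_apply, Matrix.mul_apply, Matrix.transpose_apply, hΦ,
      Matrix.of_apply, Matrix.smul_apply, Matrix.one_apply, Matrix.diagonal_apply, hg,
      smul_eq_mul]
    by_cases hab : a = b
    · subst hab
      by_cases ha : a = i0
      · subst ha
        simp [Finset.sum_ite_eq' Finset.univ j0 (fun _ => (1:ℝ))]
      · simp [ha]
    · simp only [if_neg hab, mul_zero, if_neg hab]
      rw [Finset.sum_eq_zero]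
      · simp [hab]
      · intro x _
        by_cases h1 : a = i0 ∧ x = j0 <;> by_cases h2 : b = i0 ∧ x = j0 <;>
          simp_all
  have hMinv : (Φ * Φᵀ + β • (1 : Matrix (Fin d) (Fin d) ℝ))⁻¹
      = Matrix.diagonal (fun k => (g k)⁻¹) := by
    rw [hM]
    apply Matrix.inv_eq_right_inv
    rw [Matrix.diagonal_mul_diagonal]
    ext a b
    simp [Matrix.diagonal_apply, Matrix.one_apply, mul_inv_cancel₀ (hgne a)]
  have hW : ∀ i k, Wstar β Y Φ i k = if k = i0 then Y i j0 * (1 + β)⁻¹ else 0 := by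
    intro i k
    rw [Wstar, hMinv, Matrix.mul_diagonal]
    simp only [Matrix.mul_apply, Matrix.transpose_apply, hΦ, Matrix.of_apply]
    by_cases hk : k = i0
    · subst hk
      simp [Finset.sum_ite_eq' Finset.univ j0 (fun m => Y i m), hg, mul_comm,
        add_comm β 1]
    · rw [Finset.sum_eq_zero, zero_mul, if_neg hk]
      intro x _
      simp [hk]
  have hWΦ : ∀ i j, (Wstar β Y Φ * Φ) i j
      = if j = j0 then Y i j0 * (1 + β)⁻¹ else 0 := by
    intro i j
    rw [Matrix.mul_apply]
    rw [Finset.sum_congr rfl (fun k _ => by rw [hW i k])]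
    simp only [hΦ, Matrix.of_apply]
    by_cases hj : j = j0
    · subst hj
      rw [Finset.sum_eq_single i0]
      · simp
      · intro b _ hb; simp [hb]
      · simp
    · rw [Finset.sum_eq_zero, if_neg hj]
      intro k _
      simp [hj]
  refine ⟨Φ, ?_⟩
  have hLΦ : Lstar β Y Φ = sqFrob Y - (∑ i, (Y i j0)^2) * (1 + β)⁻¹ := by
    have h1 : sqFrob (Y - Wstar β Y Φ * Φ)
        = ∑ i, ∑ j, ((if j = j0 then (Y i j0 * β * (1+β)⁻¹)^2 else (Y i j)^2)) := by
      unfold sqFrob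
      refine Finset.sum_congr rfl fun i _ => Finset.sum_congr rfl fun j _ => ?_
      rw [Matrix.sub_apply, hWΦ]
      by_cases hj : j = j0
      · subst hj; simp only [if_pos rfl, eq_self_iff_true, ↓reduceIte]
        field_simp
        ring
      · simp [hj]
    have h2 : sqFrob (Wstar β Y Φ)
        = ∑ i, (Y i j0 * (1+β)⁻¹)^2 := by
      unfold sqFrob
      refine Finset.sum_congr rfl fun i _ => ?_
      rw [Finset.sum_congr rfl (fun k _ => by rw [hW i k])]
      rw [Finset.sum_eq_single i0]
      · simp
      · intro b _ hb; simp [hb]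
      · simp
    have key : ∀ i : Fin o,
        (∑ j, if j = j0 then (Y i j0 * β * (1+β)⁻¹)^2 else (Y i j)^2)
          + β * (Y i j0 * (1+β)⁻¹)^2
        = (∑ j, (Y i j)^2) - (Y i j0)^2 * (1 + β)⁻¹ := by
      intro i
      have hsplit : ∀ j : Fin n,
          (if j = j0 then (Y i j0 * β * (1+β)⁻¹)^2 else (Y i j)^2)
          = (Y i j)^2 + (if j = j0 then (Y i j0 * β * (1+β)⁻¹)^2 - (Y i j0)^2 else 0) := by
        intro j
        by_cases hj : j = j0
        · subst hj; simp
        · simp [hj]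
      rw [Finset.sum_congr rfl (fun j _ => hsplit j), Finset.sum_add_distrib,
        Finset.sum_ite_eq' Finset.univ j0
          (fun _ => (Y i j0 * β * (1+β)⁻¹)^2 - (Y i j0)^2)]
      simp only [Finset.mem_univ, if_pos]
      have h1β : (1 + β) ≠ 0 := ne_of_gt hβ1
      field_simp
      ring
    rw [Lstar, h1, h2, Finset.mul_sum, ← Finset.sum_add_distrib, sqFrob,
      Finset.sum_congr rfl (fun i _ => key i), Finset.sum_sub_distrib, ← Finset.sum_mul]
  rw [hLΦ, hL0]
  have hS : 0 < ∑ i, (Y i j0)^2 :=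
    Finset.sum_pos' (fun i _ => sq_nonneg _)
      ⟨i1, Finset.mem_univ _, by positivity⟩
  have : 0 < (∑ i, (Y i j0)^2) * (1 + β)⁻¹ := by positivity
  linarith
end

section
/- (Theorem 3, non-convexity part.) Let o, d, n be positive integers, β > 0, and Y ∈ ℝ^{o×n} with Y ≠ 0. Then the reduced loss L* : ℝ^{d×n} → ℝ is not a convex function on ℝ^{d×n}. -/
open Matrix BigOperators

attribute [local instance] Matrix.frobeniusNormedAddCommGroup Matrix.frobeniusNormedSpace

section Aux

variable {o d n : ℕ}

lemma sqFrob_neg' {m n : ℕ} (A : Matrix (Fin m) (Fin n) ℝ) : sqFrob (-A) = sqFrob A := by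
  simp [sqFrob]

lemma Wstar_neg' (β : ℝ) (Y : Matrix (Fin o) (Fin n) ℝ) (Φ : Matrix (Fin d) (Fin n) ℝ) :
    Wstar β Y (-Φ) = -(Wstar β Y Φ) := by
  simp [Wstar, Matrix.neg_mul, Matrix.mul_neg, Matrix.transpose_neg]

lemma Lstar_neg' (β : ℝ) (Y : Matrix (Fin o) (Fin n) ℝ) (Φ : Matrix (Fin d) (Fin n) ℝ) :
    Lstar β Y (-Φ) = Lstar β Y Φ := by
  simp [Lstar, Wstar_neg', sqFrob_neg', Matrix.neg_mul, Matrix.mul_neg, neg_neg]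

lemma Lstar_zero' (β : ℝ) (Y : Matrix (Fin o) (Fin n) ℝ) :
    Lstar β Y (0 : Matrix (Fin d) (Fin n) ℝ) = sqFrob Y := by
  simp [Lstar, Wstar, sqFrob]


lemma hM_std (β : ℝ) (k0 : Fin d) (j0 : Fin n) :
    Matrix.single k0 j0 (1:ℝ) * (Matrix.single k0 j0 (1:ℝ))ᵀ
      + β • (1 : Matrix (Fin d) (Fin d) ℝ)
    = Matrix.diagonal (fun k => if k = k0 then 1 + β else β) := by
  ext i j
  by_cases hi : i = k0 <;> by_cases hj : j = k0 <;> by_cases hij : i = j <;>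
    simp_all [Matrix.mul_apply, Matrix.single, Matrix.diagonal, Matrix.one_apply,
      Finset.sum_ite_eq, eq_comm]

lemma hinv_diag (g : Fin d → ℝ) (hg : ∀ k, g k ≠ 0) :
    (Matrix.diagonal g)⁻¹ = Matrix.diagonal (fun k => (g k)⁻¹) := by
  apply Matrix.inv_eq_right_inv
  have h : (fun k => g k * (g k)⁻¹) = fun _ => (1:ℝ) := funext fun k => mul_inv_cancel₀ (hg k)
  rw [Matrix.diagonal_mul_diagonal, h, Matrix.diagonal_one]

lemma hW_aux (β : ℝ) (Y : Matrix (Fin o) (Fin n) ℝ) (k0 : Fin d) (j0 : Fin n) :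
    Y * (Matrix.single k0 j0 (1:ℝ))ᵀ
      * Matrix.diagonal (fun k => if k = k0 then (1 + β)⁻¹ else β⁻¹)
    = Matrix.of (fun i k => if k = k0 then Y i j0 * (1 + β)⁻¹ else 0) := by
  ext i k
  rw [Matrix.mul_diagonal]
  by_cases hk : k = k0
  · simp [Matrix.mul_apply, Matrix.single, hk]
  · have hk' : k0 ≠ k := fun h => hk h.symm
    simp [Matrix.mul_apply, Matrix.single, hk, hk']

lemma Lstar_std (β : ℝ) (hβ : 0 < β) (Y : Matrix (Fin o) (Fin n) ℝ) (k0 : Fin d) (j0 : Fin n) :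
    Lstar β Y (Matrix.single k0 j0 (1:ℝ))
      = sqFrob Y - (1 + β)⁻¹ * ∑ i, (Y i j0) ^ 2 := by
  have h1β : (1:ℝ) + β ≠ 0 := by positivity
  have hβ0 : β ≠ 0 := ne_of_gt hβ
  have hg : ∀ k : Fin d, (if k = k0 then 1 + β else β) ≠ 0 := by
    intro k; by_cases h : k = k0 <;> simp [h, h1β, hβ0]
  have hW : Wstar β Y (Matrix.single k0 j0 (1:ℝ))
      = Matrix.of (fun i k => if k = k0 then Y i j0 * (1 + β)⁻¹ else 0) := by
    unfold Wstar
    rw [hM_std β k0 j0, hinv_diag _ hg]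
    simp only [apply_ite (Inv.inv : ℝ → ℝ)]
    exact hW_aux β Y k0 j0
  have hWΦ : Matrix.of (fun i k => if k = k0 then Y i j0 * (1 + β)⁻¹ else 0)
        * Matrix.single k0 j0 (1:ℝ)
      = Matrix.of (fun i j => if j = j0 then Y i j0 * (1 + β)⁻¹ else 0) := by
    ext i j
    by_cases hj : j = j0
    · simp [Matrix.mul_apply, Matrix.single, hj, Finset.sum_ite_eq]
    · have hj' : j0 ≠ j := fun h => hj h.symm
      simp [Matrix.mul_apply, Matrix.single, hj, hj']
  rw [Lstar, hW, hWΦ]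
  unfold sqFrob
  have key1 : ∀ i, ∑ j, ((Y - Matrix.of fun i j => if j = j0 then Y i j0 * (1 + β)⁻¹ else 0) i j) ^ 2
      = (∑ j, (Y i j) ^ 2)
        + ((Y i j0 * (1 + β)⁻¹) ^ 2 - 2 * Y i j0 * (Y i j0 * (1 + β)⁻¹)) := by
    intro i
    have h : ∀ j, ((Y - Matrix.of fun i j => if j = j0 then Y i j0 * (1 + β)⁻¹ else 0) i j) ^ 2
        = (Y i j) ^ 2 + (if j = j0 then
            ((Y i j0 * (1 + β)⁻¹) ^ 2 - 2 * Y i j0 * (Y i j0 * (1 + β)⁻¹)) else 0) := by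
      intro j; by_cases hj : j = j0 <;> simp [Matrix.sub_apply, hj] <;> ring
    simp only [h, Finset.sum_add_distrib, Finset.sum_ite_eq', Finset.mem_univ, if_true]
  have key2 : ∀ i : Fin o, ∑ k, ((Matrix.of fun i k => if k = k0 then Y i j0 * (1 + β)⁻¹ else 0) i k) ^ 2
      = (Y i j0 * (1 + β)⁻¹) ^ 2 := by
    intro i
    simp [apply_ite (fun x : ℝ => x ^ 2), Finset.sum_ite_eq']
  simp only [key1, key2, Finset.sum_add_distrib, Finset.mul_sum]
  have key3 : ∀ i : Fin o,
      ((Y i j0 * (1 + β)⁻¹) ^ 2 - 2 * Y i j0 * (Y i j0 * (1 + β)⁻¹))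
        + β * (Y i j0 * (1 + β)⁻¹) ^ 2 = -((1 + β)⁻¹ * (Y i j0) ^ 2) := by
    intro i; field_simp; ring
  have hsum : (∑ i, ((Y i j0 * (1 + β)⁻¹) ^ 2 - 2 * Y i j0 * (Y i j0 * (1 + β)⁻¹)))
      + ∑ i, β * (Y i j0 * (1 + β)⁻¹) ^ 2 = -(∑ i, (1 + β)⁻¹ * (Y i j0) ^ 2) := by
    rw [← Finset.sum_add_distrib, ← Finset.sum_neg_distrib]
    exact Finset.sum_congr rfl (fun i _ => key3 i)
  linarith [hsum]

end Aux

theorem stmt_9 (o d n : ℕ) (ho : 0 < o) (hd : 0 < d) (hn : 0 < n)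
    (β : ℝ) (hβ : 0 < β)
    (Y : Matrix (Fin o) (Fin n) ℝ) (hY : Y ≠ 0) :
    ¬ ConvexOn ℝ (Set.univ : Set (Matrix (Fin d) (Fin n) ℝ)) (Lstar β Y) := by
  intro hconv
  have hex : ∃ i j, Y i j ≠ 0 := by
    by_contra h
    push_neg at h
    exact hY (by ext i j; simp [h i j])
  obtain ⟨i0, j0, hij⟩ := hex
  set k0 : Fin d := ⟨0, hd⟩
  set Φ : Matrix (Fin d) (Fin n) ℝ := Matrix.single k0 j0 (1:ℝ) with hΦ
  have h := hconv.2 (Set.mem_univ Φ) (Set.mem_univ (-Φ))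
    (by norm_num : (0:ℝ) ≤ 1/2) (by norm_num : (0:ℝ) ≤ 1/2) (by norm_num)
  have hmid : (1/2 : ℝ) • Φ + (1/2 : ℝ) • (-Φ) = 0 := by
    simp [smul_neg]
  rw [hmid, Lstar_zero', Lstar_neg', Lstar_std β hβ Y k0 j0] at h
  have hsumpos : 0 < ∑ i, (Y i j0) ^ 2 := by
    apply Finset.sum_pos' (fun i _ => sq_nonneg _)
    exact ⟨i0, Finset.mem_univ _, by positivity⟩
  have hspos : 0 < (1 + β)⁻¹ := by positivity
  simp only [smul_eq_mul] at h
  nlinarith [mul_pos hspos hsumpos]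
end

section
/- (Theorem 3, critical-point part.) Let o, d, n be positive integers, β > 0, and Y ∈ ℝ^{o×n} with Y ≠ 0. Then the reduced loss L* : ℝ^{d×n} → ℝ admits a critical point that is not a global minimizer: there exists Φ⋆ ∈ ℝ^{d×n} (e.g. Φ⋆ = 0) such that DL*(Φ⋆) = 0 while there exists Φ ∈ ℝ^{d×n} with L*(Φ) < L*(Φ⋆). -/
open Matrix BigOperators

attribute [local instance] Matrix.frobeniusNormedAddCommGroup Matrix.frobeniusNormedSpace

open Asymptotics Filter
lemma sqFrob_eq_sq_norm {m k : ℕ} (A : Matrix (Fin m) (Fin k) ℝ) : sqFrob A = ‖A‖ ^ 2 := by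
  have hterm : ∀ i j, ‖A i j‖ ^ (2:ℝ) = (A i j)^2 := by
    intro i j
    rw [show (2:ℝ) = ((2:ℕ):ℝ) by norm_num, Real.rpow_natCast, Real.norm_eq_abs, sq_abs]
  have hnn : (0:ℝ) ≤ ∑ i, ∑ j, ‖A i j‖ ^ (2:ℝ) := by positivity
  have : sqFrob A = ∑ i, ∑ j, ‖A i j‖ ^ (2:ℝ) := by
    unfold sqFrob; simp_rw [hterm]
  rw [this, Matrix.frobenius_norm_def, ← Real.rpow_natCast _ 2, ← Real.rpow_mul hnn]
  norm_num

lemma arith (β a K p w t L1 C : ℝ) (hβ : 0 < β) (ha0 : 0 ≤ a) (hK0 : 0 ≤ K)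
    (hp0 : 0 ≤ p) (hp1 : p ≤ 1) (hw0 : 0 ≤ w) (ht0 : 0 ≤ t)
    (hw : w ≤ a * K * p) (ht : t ≤ w * p)
    (hupper : L1 ≤ (a + t) ^ 2) (hlower : (a - t) ^ 2 ≤ L1)
    (hC : C = 2 * a ^ 2 * K + a ^ 2 * K ^ 2 + β * a ^ 2 * K ^ 2) :
    |L1 + β * w ^ 2 - a ^ 2| ≤ C * p ^ 2 := by
  have hwp : t ≤ a * K * p ^ 2 := by nlinarith
  have hw2 : w ^ 2 ≤ a ^ 2 * K ^ 2 * p ^ 2 := by nlinarith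
  have hp2 : p ^ 2 ≤ 1 := by nlinarith
  have htt : t * t ≤ (a * K * p ^ 2) * (a * K * p ^ 2) :=
    mul_le_mul hwp hwp ht0 (by positivity)
  have ht2 : t ^ 2 ≤ a ^ 2 * K ^ 2 * p ^ 2 := by
    nlinarith [htt, hp2,
      mul_nonneg (mul_nonneg (mul_nonneg ha0 ha0) (mul_nonneg hK0 hK0)) (sq_nonneg p)]
  have h2at : a * t ≤ a ^ 2 * K * p ^ 2 := by nlinarith
  rw [abs_le, hC]
  constructor
  · nlinarith [mul_nonneg hβ.le (sq_nonneg w), sq_nonneg t,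
      mul_nonneg (mul_nonneg (sq_nonneg a) (sq_nonneg K)) (sq_nonneg p),
      mul_nonneg (mul_nonneg hβ.le (mul_nonneg (sq_nonneg a) (sq_nonneg K))) (sq_nonneg p)]
  · nlinarith [mul_nonneg hβ.le (sq_nonneg w)]

lemma lstar_zero {o d n : ℕ} (β : ℝ) (Y : Matrix (Fin o) (Fin n) ℝ) :
    Lstar β Y (0 : Matrix (Fin d) (Fin n) ℝ) = sqFrob Y := by
  have hW : Wstar β Y (0 : Matrix (Fin d) (Fin n) ℝ) = 0 := by
    rw [Wstar, transpose_zero, Matrix.mul_zero, Matrix.zero_mul]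
  rw [Lstar, hW, Matrix.zero_mul, sub_zero]
  have : sqFrob (0 : Matrix (Fin o) (Fin d) ℝ) = 0 := by simp [sqFrob]
  rw [this, mul_zero, add_zero]

section
attribute [local instance] Matrix.frobeniusNormedRing

lemma hasFDeriv_zero {o d n : ℕ} (β : ℝ) (hβ : 0 < β) (Y : Matrix (Fin o) (Fin n) ℝ) :
    HasFDerivAt (Lstar (o := o) (d := d) (n := n) β Y)
      (0 : Matrix (Fin d) (Fin n) ℝ →L[ℝ] ℝ) 0 := by
  -- continuity of the inverse at 0
  have hinv : Invertible (β • (1 : Matrix (Fin d) (Fin d) ℝ)) := by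
    refine ⟨β⁻¹ • 1, ?_, ?_⟩ <;>
      rw [smul_mul_smul_comm] <;>
      simp [inv_mul_cancel₀ hβ.ne', mul_inv_cancel₀ hβ.ne']
  have hu : IsUnit (β • (1 : Matrix (Fin d) (Fin d) ℝ)) := isUnit_of_invertible _
  have h1 : Continuous (fun Φ : Matrix (Fin d) (Fin n) ℝ =>
      Φ * Φᵀ + β • (1 : Matrix (Fin d) (Fin d) ℝ)) :=
    (continuous_id.matrix_mul continuous_id.matrix_transpose).add continuous_const
  have h2 : ContinuousAt (Ring.inverse : Matrix (Fin d) (Fin d) ℝ → _)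
      (β • (1 : Matrix (Fin d) (Fin d) ℝ)) := by
    have := NormedRing.inverse_continuousAt hu.unit
    rw [hu.unit_spec] at this
    exact this
  have h3 := ContinuousAt.comp (g := Ring.inverse)
    (f := fun Φ : Matrix (Fin d) (Fin n) ℝ => Φ * Φᵀ + β • (1 : Matrix (Fin d) (Fin d) ℝ))
    (x := 0) (by simpa using h2) h1.continuousAt
  have hcont : ContinuousAt (fun Φ : Matrix (Fin d) (Fin n) ℝ =>
      (Φ * Φᵀ + β • (1 : Matrix (Fin d) (Fin d) ℝ))⁻¹) 0 := by
    simp only [Matrix.nonsing_inv_eq_ringInverse]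
    exact h3
  obtain ⟨K, hKdef⟩ : ∃ K : ℝ, K = ‖((0 : Matrix (Fin d) (Fin n) ℝ)
      * (0 : Matrix (Fin d) (Fin n) ℝ)ᵀ
      + β • (1 : Matrix (Fin d) (Fin d) ℝ))⁻¹‖ + 1 := ⟨_, rfl⟩
  have hK0 : 0 ≤ K := by rw [hKdef]; positivity
  have hKb : ∀ᶠ Φ : Matrix (Fin d) (Fin n) ℝ in nhds 0,
      ‖(Φ * Φᵀ + β • (1 : Matrix (Fin d) (Fin d) ℝ))⁻¹‖ ≤ K := by
    have ht := hcont.norm.tendsto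
    have : ‖((0 : Matrix (Fin d) (Fin n) ℝ) * (0 : Matrix (Fin d) (Fin n) ℝ)ᵀ
        + β • (1 : Matrix (Fin d) (Fin d) ℝ))⁻¹‖ < K := by
      rw [hKdef]; linarith
    exact (ht.eventually_lt_const this).mono fun Φ h => h.le
  have hsmall : ∀ᶠ Φ : Matrix (Fin d) (Fin n) ℝ in nhds 0, ‖Φ‖ ≤ 1 := by
    have := Metric.ball_mem_nhds (0 : Matrix (Fin d) (Fin n) ℝ) one_pos
    filter_upwards [this] with Φ h
    simpa [dist_eq_norm] using (mem_ball_zero_iff.mp h).le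
  obtain ⟨a, hadef⟩ : ∃ a : ℝ, a = ‖Y‖ := ⟨_, rfl⟩
  obtain ⟨C, hCdef⟩ : ∃ C : ℝ,
      C = 2 * a ^ 2 * K + a ^ 2 * K ^ 2 + β * a ^ 2 * K ^ 2 := ⟨_, rfl⟩
  have hC0 : 0 ≤ C := by rw [hCdef]; positivity
  have hbound : ∀ᶠ Φ : Matrix (Fin d) (Fin n) ℝ in nhds 0,
      |Lstar β Y Φ - Lstar β Y (0 : Matrix (Fin d) (Fin n) ℝ)| ≤ C * ‖Φ‖ ^ 2 := by
    filter_upwards [hKb, hsmall] with Φ hKΦ hΦ1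
    set W := Wstar β Y Φ with hWdef
    have hw : ‖W‖ ≤ a * K * ‖Φ‖ := by
      calc ‖W‖ ≤ ‖Y * Φᵀ‖ * ‖(Φ * Φᵀ + β • (1 : Matrix (Fin d) (Fin d) ℝ))⁻¹‖ :=
            Matrix.frobenius_norm_mul _ _
        _ ≤ (‖Y‖ * ‖Φᵀ‖) * K := by
            apply mul_le_mul (Matrix.frobenius_norm_mul _ _) hKΦ (norm_nonneg _)
            positivity
        _ = a * K * ‖Φ‖ := by rw [Matrix.frobenius_norm_transpose, hadef]; ring
    have ht : ‖W * Φ‖ ≤ ‖W‖ * ‖Φ‖ := Matrix.frobenius_norm_mul _ _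
    have hL : Lstar β Y Φ = ‖Y - W * Φ‖ ^ 2 + β * ‖W‖ ^ 2 := by
      rw [Lstar, sqFrob_eq_sq_norm, sqFrob_eq_sq_norm]
    have hupper : ‖Y - W * Φ‖ ^ 2 ≤ (a + ‖W * Φ‖) ^ 2 := by
      apply pow_le_pow_left₀ (norm_nonneg _) _ 2
      rw [hadef]
      exact norm_sub_le _ _
    have hlower : (a - ‖W * Φ‖) ^ 2 ≤ ‖Y - W * Φ‖ ^ 2 := by
      have h := abs_norm_sub_norm_le Y (W * Φ)
      have h2 : (a - ‖W * Φ‖) ^ 2 = |‖Y‖ - ‖W * Φ‖| ^ 2 := by rw [sq_abs, hadef]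
      rw [h2]
      exact pow_le_pow_left₀ (abs_nonneg _) h 2
    rw [hL, lstar_zero, sqFrob_eq_sq_norm, ← hadef]
    exact arith β a K ‖Φ‖ ‖W‖ ‖W * Φ‖ (‖Y - W * Φ‖ ^ 2) C hβ
      (by rw [hadef]; positivity) hK0 (norm_nonneg _) hΦ1 (norm_nonneg _) (norm_nonneg _)
      hw ht hupper hlower hCdef
  -- conclude
  refine hasFDerivAt_iff_isLittleO_nhds_zero.mpr ?_
  rw [isLittleO_iff]
  intro ε hε
  have hsm2 : ∀ᶠ Φ : Matrix (Fin d) (Fin n) ℝ in nhds 0, ‖Φ‖ ≤ ε / (C + 1) := by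
    have hpos : 0 < ε / (C + 1) := by positivity
    have := Metric.ball_mem_nhds (0 : Matrix (Fin d) (Fin n) ℝ) hpos
    filter_upwards [this] with Φ h
    simpa [dist_eq_norm] using (mem_ball_zero_iff.mp h).le
  filter_upwards [hbound, hsm2] with Φ hb hs
  simp only [zero_add, ContinuousLinearMap.zero_apply, sub_zero]
  have : |Lstar β Y Φ - Lstar β Y (0 : Matrix (Fin d) (Fin n) ℝ)| ≤ ε * ‖Φ‖ := by
    calc |Lstar β Y Φ - Lstar β Y (0 : Matrix (Fin d) (Fin n) ℝ)| ≤ C * ‖Φ‖ ^ 2 := hb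
      _ = C * ‖Φ‖ * ‖Φ‖ := by ring
      _ ≤ (C + 1) * (ε / (C + 1)) * ‖Φ‖ := by
          apply mul_le_mul_of_nonneg_right _ (norm_nonneg _)
          have h1 : C * ‖Φ‖ ≤ C * (ε / (C + 1)) :=
            mul_le_mul_of_nonneg_left hs hC0
          have h2 : C * (ε / (C + 1)) ≤ (C + 1) * (ε / (C + 1)) := by
            apply mul_le_mul_of_nonneg_right (by linarith) (by positivity)
          linarith
      _ = ε * ‖Φ‖ := by field_simp
  rw [Real.norm_eq_abs]
  convert this using 2
  exact sub_zero _

end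

lemma conc {o d n : ℕ} (hd : 0 < d) (β : ℝ) (hβ : 0 < β)
    (Y : Matrix (Fin o) (Fin n) ℝ) (j0 : Fin n) :
    Lstar β Y (Matrix.single (⟨0, hd⟩ : Fin d) j0 (1:ℝ)) =
      sqFrob Y - (∑ i, (Y i j0) ^ 2) * (β + 1)⁻¹ := by
  have hβ1 : β + 1 ≠ 0 := by positivity
  set z : Fin d := ⟨0, hd⟩
  set Φ : Matrix (Fin d) (Fin n) ℝ := Matrix.single z j0 (1:ℝ) with hΦ
  set E : Matrix (Fin d) (Fin d) ℝ := Matrix.single z z 1 with hE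
  set c : ℝ := β⁻¹ * (β + 1)⁻¹ with hc
  set N : Matrix (Fin d) (Fin d) ℝ := β⁻¹ • 1 - c • E with hN
  have hΦΦT : Φ * Φᵀ = E := by
    ext a b
    rw [Matrix.mul_apply]
    simp only [hΦ, hE, transpose_apply, Matrix.single, of_apply]
    have : ∀ x, (if z = a ∧ j0 = x then (1:ℝ) else 0) * (if z = b ∧ j0 = x then 1 else 0)
        = if j0 = x then (if z = a ∧ z = b then (1:ℝ) else 0) else 0 := by
      intro x
      by_cases h : j0 = x <;> by_cases h1 : z = a <;> by_cases h2 : z = b <;>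
        simp [h, h1, h2]
    simp_rw [this]
    rw [Finset.sum_ite_eq Finset.univ j0]
    simp
  have hEE : E * E = E := by
    rw [hE, Matrix.single_mul_single_same, one_mul]
  have hMN : (Φ * Φᵀ + β • (1 : Matrix (Fin d) (Fin d) ℝ)) * N = 1 := by
    rw [hΦΦT, hN]
    simp only [add_mul, Matrix.mul_sub, Matrix.smul_mul, Matrix.mul_smul,
      Matrix.one_mul, Matrix.mul_one, hEE, smul_smul]
    match_scalars <;> (try simp only [hc]) <;> field_simp <;> ring
  have hinv : (Φ * Φᵀ + β • (1 : Matrix (Fin d) (Fin d) ℝ))⁻¹ = N :=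
    Matrix.inv_eq_right_inv hMN
  have hYT : ∀ i k, (Y * Φᵀ) i k = if z = k then Y i j0 else 0 := by
    intro i k
    rw [Matrix.mul_apply]
    simp only [hΦ, transpose_apply, Matrix.single, of_apply]
    have : ∀ x, Y i x * (if z = k ∧ j0 = x then (1:ℝ) else 0)
        = if j0 = x then (if z = k then Y i j0 else 0) else 0 := by
      intro x
      by_cases h : j0 = x <;> by_cases h1 : z = k <;> simp [h, h1]
    simp_rw [this]
    rw [Finset.sum_ite_eq Finset.univ j0]
    simp
  have hW : ∀ i k, Wstar β Y Φ i k = if k = z then Y i j0 * (β + 1)⁻¹ else 0 := by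
    intro i k
    rw [Wstar, hinv, Matrix.mul_apply]
    have : ∀ m, (Y * Φᵀ) i m * N m k
        = if z = m then Y i j0 * N z k else 0 := by
      intro m
      rw [hYT]
      by_cases h : z = m
      · subst h; simp
      · simp [h]
    simp_rw [this]
    rw [Finset.sum_ite_eq Finset.univ z]
    have hNzk : N z k = if k = z then β⁻¹ - c else 0 := by
      rw [hN]
      simp only [Matrix.sub_apply, Matrix.smul_apply, Matrix.one_apply, hE,
        Matrix.single, of_apply, smul_eq_mul]
      by_cases h : k = z
      · subst h; simp
      · simp [h, Ne.symm h]
    rw [hNzk]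
    have hβc : β⁻¹ - c = (β + 1)⁻¹ := by rw [hc]; field_simp; ring
    by_cases h : k = z <;> simp [h, hβc]
  have hWΦ : ∀ i m, (Wstar β Y Φ * Φ) i m = if m = j0 then Y i j0 * (β + 1)⁻¹ else 0 := by
    intro i m
    rw [Matrix.mul_apply]
    have : ∀ k, Wstar β Y Φ i k * Φ k m
        = if k = z then Y i j0 * (β + 1)⁻¹ * Φ z m else 0 := by
      intro k
      rw [hW]
      by_cases h : k = z
      · subst h; simp
      · simp [h]
    simp_rw [this]
    rw [Finset.sum_ite_eq' Finset.univ z]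
    simp only [Finset.mem_univ, if_true, hΦ, Matrix.single, of_apply]
    by_cases h : m = j0
    · subst h; simp
    · simp [h, Ne.symm h]
  have key : ∀ i, (∑ m, (Y i m - (Wstar β Y Φ * Φ) i m) ^ 2)
        + β * (∑ k, (Wstar β Y Φ i k) ^ 2)
      = (∑ m, (Y i m) ^ 2) - (Y i j0) ^ 2 * (β + 1)⁻¹ := by
    intro i
    have h1 : ∑ m, (Y i m - (Wstar β Y Φ * Φ) i m) ^ 2
        = (∑ m, (Y i m) ^ 2) + ((Y i j0 - Y i j0 * (β + 1)⁻¹) ^ 2 - (Y i j0) ^ 2) := by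
      have : ∀ m, (Y i m - (Wstar β Y Φ * Φ) i m) ^ 2
          = (Y i m) ^ 2
            + (if m = j0 then (Y i j0 - Y i j0 * (β + 1)⁻¹) ^ 2 - (Y i j0) ^ 2 else 0) := by
        intro m
        rw [hWΦ]
        by_cases hm : m = j0
        · subst hm; simp
        · simp [hm]
      simp_rw [this]
      rw [Finset.sum_add_distrib, Finset.sum_ite_eq' Finset.univ j0]
      simp
    have h2 : ∑ k, (Wstar β Y Φ i k) ^ 2 = (Y i j0 * (β + 1)⁻¹) ^ 2 := by
      have : ∀ k, (Wstar β Y Φ i k) ^ 2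
          = if k = z then (Y i j0 * (β + 1)⁻¹) ^ 2 else 0 := by
        intro k
        rw [hW]
        by_cases hk : k = z <;> simp [hk]
      simp_rw [this]
      rw [Finset.sum_ite_eq' Finset.univ z]
      simp
    rw [h1, h2]
    field_simp
    ring
  show sqFrob (Y - Wstar β Y Φ * Φ) + β * sqFrob (Wstar β Y Φ) = _
  unfold sqFrob
  simp only [Matrix.sub_apply]
  rw [Finset.mul_sum, ← Finset.sum_add_distrib]
  simp_rw [key]
  rw [Finset.sum_sub_distrib, ← Finset.sum_mul]


theorem stmt_10 (o d n : ℕ) (ho : 0 < o) (hd : 0 < d) (hn : 0 < n)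
    (β : ℝ) (hβ : 0 < β)
    (Y : Matrix (Fin o) (Fin n) ℝ) (hY : Y ≠ 0) :
    ∃ Φstar : Matrix (Fin d) (Fin n) ℝ,
      DifferentiableAt ℝ (Lstar β Y) Φstar ∧
      fderiv ℝ (Lstar β Y) Φstar = 0 ∧
      ∃ Φ : Matrix (Fin d) (Fin n) ℝ, Lstar β Y Φ < Lstar β Y Φstar := by
  obtain ⟨i0, j0, hij⟩ : ∃ i j, Y i j ≠ 0 := by
    by_contra h
    push_neg at h
    exact hY (by ext i j; simp [h])
  refine ⟨0, (hasFDeriv_zero β hβ Y).differentiableAt, (hasFDeriv_zero β hβ Y).fderiv, ?_⟩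
  refine ⟨Matrix.single (⟨0, hd⟩ : Fin d) j0 (1 : ℝ), ?_⟩
  rw [conc hd β hβ Y j0, lstar_zero]
  have h1 : 0 < (Y i0 j0) ^ 2 := by
    have := pow_pos (abs_pos.mpr hij) 2
    rwa [sq_abs] at this
  have hS : 0 < ∑ i, (Y i j0) ^ 2 :=
    Finset.sum_pos' (fun i _ => sq_nonneg _) ⟨i0, Finset.mem_univ _, h1⟩
  have hpos : 0 < (∑ i, (Y i j0) ^ 2) * (β + 1)⁻¹ := by positivity
  linarith
end
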